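/- Let γ ∈ (0,1), k ≥ 1, j ≥ 1, and let P_{γ,4k,j} = {(1−γ)·δ_{(0,0)} + γ·U_{A×{2j+1}} : A a nonempty subset of {1,…,4k}} be a class of distributions over ℕ×ℕ. Then the realizable sample complexity of P_{γ,4k,j} at accuracy γ/8 and confidence 1/7 is at least k: for every learner A and every n < k, there exists p ∈ P_{γ,4k,j} such that the probability over S ~ p^n that d_TV(A(S), p) ≤ γ/8 is strictly less than 6/7. -/

import Mathlib

open scoped BigOperators ENNReal

namespace RobustDistLearn

variable {X : Type*}

/-- `p` is a probability mass function on `X`. -/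
def IsPMF (p : X → ℝ) : Prop := (∀ x, 0 ≤ p x) ∧ ∑' x, p x = 1

/-- Total variation distance between two mass functions:
`d_TV(p,q) = (1/2)·∑ₓ |p x − q x|`. -/
noncomputable def dTV (p q : X → ℝ) : ℝ := (1 / 2) * ∑' x, |p x - q x|

/-- The probability, over a sample `S` of `n` i.i.d. draws from `p`, of the event `E`. -/
noncomputable def iidProb (p : X → ℝ) (n : ℕ) (E : Set (Fin n → X)) : ℝ :=
  ∑' S : Fin n → X, E.indicator (fun T => ∏ i, p (T i)) S

/-- The mixture `η·q + (1−η)·p`. -/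
def mix (η : ℝ) (q p : X → ℝ) : X → ℝ := fun x => η * q x + (1 - η) * p x

/-- `inf_{p' ∈ C} d_TV(p, p')`. -/
noncomputable def distToClass (p : X → ℝ) (C : Set (X → ℝ)) : ℝ := sInf (dTV p '' C)

/-- A learner maps, for each sample size `n`, a tuple `S ∈ Xⁿ` to a distribution over `X`. -/
def IsLearner (A : (n : ℕ) → (Fin n → X) → (X → ℝ)) : Prop := ∀ n S, IsPMF (A n S)

/-- Realizable learnability of a class `C` of distributions. -/
def RealizablyLearnable (C : Set (X → ℝ)) : Prop :=
  ∃ A : (n : ℕ) → (Fin n → X) → (X → ℝ), IsLearner A ∧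
    ∃ nC : ℝ → ℝ → ℕ,
      ∀ p ∈ C, ∀ ε ∈ Set.Ioo (0:ℝ) 1, ∀ δ ∈ Set.Ioo (0:ℝ) 1, ∀ n : ℕ, nC ε δ ≤ n →
        1 - δ ≤ iidProb p n {S | dTV (A n S) p ≤ ε}

/-- `α`-robust (agnostic) learnability. -/
def RobustlyLearnable (C : Set (X → ℝ)) (α : ℝ) : Prop :=
  ∃ A : (n : ℕ) → (Fin n → X) → (X → ℝ), IsLearner A ∧
    ∃ nC : ℝ → ℝ → ℕ,
      ∀ p : X → ℝ, IsPMF p → ∀ ε ∈ Set.Ioo (0:ℝ) 1, ∀ δ ∈ Set.Ioo (0:ℝ) 1, ∀ n : ℕ, nC ε δ ≤ n →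
        1 - δ ≤ iidProb p n {S | dTV (A n S) p ≤ α * distToClass p C + ε}

/-- Additive `α`-robust learnability. -/
def AdditiveRobustlyLearnable (C : Set (X → ℝ)) (α : ℝ) : Prop :=
  ∃ A : (n : ℕ) → (Fin n → X) → (X → ℝ), IsLearner A ∧
    ∃ nC : ℝ → ℝ → ℕ,
      ∀ η ∈ Set.Ioo (0:ℝ) 1, ∀ q : X → ℝ, IsPMF q → ∀ p ∈ C,
        ∀ ε ∈ Set.Ioo (0:ℝ) 1, ∀ δ ∈ Set.Ioo (0:ℝ) 1, ∀ n : ℕ, nC ε δ ≤ n →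
          1 - δ ≤ iidProb (mix η q p) n {S | dTV (A n S) (mix η q p) ≤ α * η + ε}

/-- Huber additive `α`-robust learnability: the guarantee is with respect to the clean `p`. -/
def HuberAdditiveRobustlyLearnable (C : Set (X → ℝ)) (α : ℝ) : Prop :=
  ∃ A : (n : ℕ) → (Fin n → X) → (X → ℝ), IsLearner A ∧
    ∃ nC : ℝ → ℝ → ℕ,
      ∀ η ∈ Set.Ioo (0:ℝ) 1, ∀ q : X → ℝ, IsPMF q → ∀ p ∈ C,
        ∀ ε ∈ Set.Ioo (0:ℝ) 1, ∀ δ ∈ Set.Ioo (0:ℝ) 1, ∀ n : ℕ, nC ε δ ≤ n →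
          1 - δ ≤ iidProb (mix η q p) n {S | dTV (A n S) p ≤ α * η + ε}

/-- Subtractive `α`-robust learnability. -/
def SubtractiveRobustlyLearnable (C : Set (X → ℝ)) (α : ℝ) : Prop :=
  ∃ A : (n : ℕ) → (Fin n → X) → (X → ℝ), IsLearner A ∧
    ∃ nC : ℝ → ℝ → ℕ,
      ∀ η ∈ Set.Ioo (0:ℝ) 1, ∀ p : X → ℝ, IsPMF p →
        (∃ q : X → ℝ, IsPMF q ∧ mix η q p ∈ C) →
        ∀ ε ∈ Set.Ioo (0:ℝ) 1, ∀ δ ∈ Set.Ioo (0:ℝ) 1, ∀ n : ℕ, nC ε δ ≤ n →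
          1 - δ ≤ iidProb p n {S | dTV (A n S) p ≤ α * η + ε}

/-- `η`-`α`-robust learnability (known corruption level `η`). -/
def EtaRobustlyLearnable (C : Set (X → ℝ)) (η α : ℝ) : Prop :=
  ∃ A : (n : ℕ) → (Fin n → X) → (X → ℝ), IsLearner A ∧
    ∃ nC : ℝ → ℝ → ℕ,
      ∀ p : X → ℝ, IsPMF p → distToClass p C ≤ η →
        ∀ ε ∈ Set.Ioo (0:ℝ) 1, ∀ δ ∈ Set.Ioo (0:ℝ) 1, ∀ n : ℕ, nC ε δ ≤ n →
          1 - δ ≤ iidProb p n {S | dTV (A n S) p ≤ α * η + ε}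

/-- `η`-additive `α`-robust learnability (known corruption level `η`). -/
def EtaAdditiveRobustlyLearnable (C : Set (X → ℝ)) (η α : ℝ) : Prop :=
  ∃ A : (n : ℕ) → (Fin n → X) → (X → ℝ), IsLearner A ∧
    ∃ nC : ℝ → ℝ → ℕ,
      ∀ q : X → ℝ, IsPMF q → ∀ p ∈ C,
        ∀ ε ∈ Set.Ioo (0:ℝ) 1, ∀ δ ∈ Set.Ioo (0:ℝ) 1, ∀ n : ℕ, nC ε δ ≤ n →
          1 - δ ≤ iidProb (mix η q p) n {S | dTV (A n S) (mix η q p) ≤ α * η + ε}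

/-- `η`-subtractive `α`-robust learnability (known corruption level `η`). -/
def EtaSubtractiveRobustlyLearnable (C : Set (X → ℝ)) (η α : ℝ) : Prop :=
  ∃ A : (n : ℕ) → (Fin n → X) → (X → ℝ), IsLearner A ∧
    ∃ nC : ℝ → ℝ → ℕ,
      ∀ p : X → ℝ, IsPMF p →
        (∃ q : X → ℝ, IsPMF q ∧ mix η q p ∈ C) →
        ∀ ε ∈ Set.Ioo (0:ℝ) 1, ∀ δ ∈ Set.Ioo (0:ℝ) 1, ∀ n : ℕ, nC ε δ ≤ n →
          1 - δ ≤ iidProb p n {S | dTV (A n S) p ≤ α * η + ε}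

/-- The probability of an event under a `PMF`. -/
noncomputable def pmfProb {Y : Type*} (m : PMF Y) (E : Set Y) : ℝ :=
  (m.toOuterMeasure E).toReal

/-- `(ε,δ)`-differential privacy of a randomized algorithm on inputs of size `n`. -/
def IsDP {Y : Type*} {n : ℕ} (M : (Fin n → X) → PMF Y) (ε δ : ℝ) : Prop :=
  ∀ x x' : Fin n → X, (∃ i : Fin n, ∀ j : Fin n, j ≠ i → x j = x' j) →
    ∀ B : Set Y,
      (M x).toOuterMeasure B ≤
        ENNReal.ofReal (Real.exp ε) * (M x').toOuterMeasure B + ENNReal.ofReal δ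

/-- Probability, jointly over `S ~ pⁿ` and the internal randomness of `M`, of the event `E`
on the output of `M`. -/
noncomputable def randIidProb {Y : Type*} (p : X → ℝ) (n : ℕ)
    (M : (Fin n → X) → PMF Y) (E : Set Y) : ℝ :=
  ∑' S : Fin n → X, (∏ i, p (S i)) * pmfProb (M S) E

/-- Approximate DP learnability. -/
def ApproxDPLearnable (C : Set (X → ℝ)) : Prop :=
  ∃ Alg : (n : ℕ) → (Fin n → X) → PMF (X → ℝ),
    (∀ n S f, f ∈ (Alg n S).support → IsPMF f) ∧
    ∃ nC : ℝ → ℝ → ℝ → ℝ → ℕ,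
      ∀ p ∈ C, ∀ α ∈ Set.Ioo (0:ℝ) 1, ∀ β ∈ Set.Ioo (0:ℝ) 1,
        ∀ ε ∈ Set.Ioo (0:ℝ) 1, ∀ δ ∈ Set.Ioo (0:ℝ) 1, ∀ n : ℕ, nC α β ε δ ≤ n →
          IsDP (Alg n) ε δ ∧
          1 - β ≤ randIidProb p n (Alg n) {f | dTV p f ≤ α}

/-- Pure DP learnability. -/
def PureDPLearnable (C : Set (X → ℝ)) : Prop :=
  ∃ Alg : (n : ℕ) → (Fin n → X) → PMF (X → ℝ),
    (∀ n S f, f ∈ (Alg n S).support → IsPMF f) ∧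
    ∃ nC : ℝ → ℝ → ℝ → ℕ,
      ∀ p ∈ C, ∀ α ∈ Set.Ioo (0:ℝ) 1, ∀ β ∈ Set.Ioo (0:ℝ) 1, ∀ ε ∈ Set.Ioo (0:ℝ) 1,
        ∀ n : ℕ, nC α β ε ≤ n →
          IsDP (Alg n) ε 0 ∧
          1 - β ≤ randIidProb p n (Alg n) {f | dTV p f ≤ α}

/-- `α`-robust learnability by a possibly randomized learner. -/
def RandRobustlyLearnable (C : Set (X → ℝ)) (α : ℝ) : Prop :=
  ∃ Alg : (n : ℕ) → (Fin n → X) → PMF (X → ℝ),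
    (∀ n S f, f ∈ (Alg n S).support → IsPMF f) ∧
    ∃ nC : ℝ → ℝ → ℕ,
      ∀ p : X → ℝ, IsPMF p → ∀ ε ∈ Set.Ioo (0:ℝ) 1, ∀ δ ∈ Set.Ioo (0:ℝ) 1,
        ∀ n : ℕ, nC ε δ ≤ n →
          1 - δ ≤ randIidProb p n (Alg n) {f | dTV f p ≤ α * distToClass p C + ε}

/-- A class `C` admits `(τ, t, nf)` `r`-robust sample compression. -/
def AdmitsCompression (C : Set (X → ℝ)) (τ t nf : ℝ → ℕ) (r : ℝ) : Prop :=
  ∃ J : List X → List Bool → (X → ℝ),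
    (∀ L B, J L B ∈ C) ∧
    ∀ q ∈ C, ∀ p : X → ℝ, IsPMF p → dTV p q ≤ r →
      ∀ ε ∈ Set.Ioo (0:ℝ) 1,
        (2 : ℝ) / 3 ≤ iidProb p (nf ε)
          {S | ∃ L : List X, ∃ B : List Bool,
            L.length ≤ τ ε ∧ (∀ x ∈ L, ∃ i, S i = x) ∧ B.length ≤ t ε ∧
            dTV (J L B) q ≤ r + ε}

/-- The distribution `q_{i,j,k} = (1−1/j)·δ_{(0,0)} + (1/j − 1/k)·U_{A_i×{2j+1}} + (1/k)·δ_{(i,2j+2)}`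
over `ℕ × ℕ`, for a given enumeration `A` of the finite nonempty subsets of `ℕ`. -/
noncomputable def qDist (A : ℕ → Finset ℕ) (i j k : ℕ) : ℕ × ℕ → ℝ := fun x =>
  (if x = (0, 0) then 1 - 1 / (j : ℝ) else 0) +
  (if x.1 ∈ A i ∧ x.2 = 2 * j + 1 then (1 / (j : ℝ) - 1 / (k : ℝ)) / ((A i).card : ℝ) else 0) +
  (if x = (i, 2 * j + 2) then 1 / (k : ℝ) else 0)

/-- The class `Q_g = {q_{i,j,g(j)} : i, j ∈ ℕ, j ≥ 1}`. -/
def Qg (A : ℕ → Finset ℕ) (g : ℕ → ℕ) : Set (ℕ × ℕ → ℝ) :=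
  {p | ∃ i j : ℕ, 1 ≤ j ∧ p = qDist A i j (g j)}

/-- The distribution `(1−γ)·δ_{(0,0)} + γ·U_{B×{2j+1}}` over `ℕ × ℕ`. -/
noncomputable def pDist (γ : ℝ) (B : Finset ℕ) (j : ℕ) : ℕ × ℕ → ℝ := fun x =>
  (if x = (0, 0) then 1 - γ else 0) +
  (if x.1 ∈ B ∧ x.2 = 2 * j + 1 then γ / (B.card : ℝ) else 0)

/-- `g : ℕ → ℕ` is superlinear: `g(t)/t → ∞`. -/
def Superlinear (g : ℕ → ℕ) : Prop :=
  Filter.Tendsto (fun t : ℕ => (g t : ℝ) / (t : ℝ)) Filter.atTop Filter.atTop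



section AuxPacking

open Finset

private lemma six_five_of_sq {g f : ℕ} (h : 3 * g^2 ≤ 2 * f^2) : 6 * g ≤ 5 * f := by
  by_contra hcon
  push_neg at hcon
  have h1 : 5*f + 1 ≤ 6*g := hcon
  have h2 : (5*f+1)^2 ≤ (6*g)^2 := Nat.pow_le_pow_left h1 2
  zify at h2 h
  nlinarith [h2, h]

private lemma clique_bound (k t : ℕ) (htk : t < k) (I T : Finset ℕ) (hT : T ⊆ I)
    (hI : I.card = 4*k) (hTc : T.card = t)
    (F G : Finset (Finset ℕ))
    (hF : ∀ B, B ∈ F ↔ (B ⊆ I ∧ B.card = 2*k ∧ T ⊆ B))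
    (hG : G ⊆ F)
    (hpair : ∀ B ∈ G, ∀ B' ∈ G, 3*k ≤ 2*t + 2*(((B ∩ B') \ T).card)) :
    6 * G.card ≤ 5 * F.card := by
  classical
  obtain ⟨s, hst⟩ : ∃ s, s + t = 2*k := ⟨2*k - t, by omega⟩
  obtain ⟨N, hNt⟩ : ∃ N, N + t = 4*k := ⟨4*k - t, by omega⟩
  have hs1 : 1 ≤ s := by omega
  have hN1 : 1 ≤ N := by omega
  have hITcard : (I \ T).card = N := by rw [card_sdiff_of_subset hT, hI, hTc]; omega
  obtain ⟨e, he⟩ : ∃ e, e = Nat.choose (N-1) (s-1) := ⟨_, rfl⟩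
  have hcap : ∀ B ∈ F, ∀ B' ∈ F, ((B ∩ B') \ T).card
      = ∑ x ∈ I \ T, (if x ∈ B then 1 else 0) * (if x ∈ B' then 1 else 0) := by
    intro B hB B' hB'
    have hBI : B ⊆ I := ((hF B).1 hB).1
    have heq : (B ∩ B') \ T = (I \ T).filter (fun x => x ∈ B ∧ x ∈ B') := by
      ext x
      simp only [mem_sdiff, mem_inter, mem_filter]
      constructor
      · rintro ⟨⟨h1, h2⟩, h3⟩; exact ⟨⟨hBI h1, h3⟩, h1, h2⟩
      · rintro ⟨⟨_, h3⟩, h1, h2⟩; exact ⟨⟨h1, h2⟩, h3⟩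
    rw [heq, card_filter]
    refine Finset.sum_congr rfl fun x _ => ?_
    by_cases h1 : x ∈ B <;> by_cases h2 : x ∈ B' <;> simp [h1, h2]
  have hdouble : ∑ B ∈ F, ∑ B' ∈ F, ((B ∩ B') \ T).card
      = ∑ x ∈ I \ T, ((F.filter (fun B => x ∈ B)).card)^2 := by
    rw [Finset.sum_congr rfl fun B hB => Finset.sum_congr rfl fun B' hB' => hcap B hB B' hB']
    rw [Finset.sum_congr rfl fun B (_ : B ∈ F) => Finset.sum_comm]
    rw [Finset.sum_comm]
    refine Finset.sum_congr rfl fun x _ => ?_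
    rw [← Finset.sum_mul_sum]
    rw [← Finset.card_filter, sq]
  have hf : Nat.choose N s ≤ F.card := by
    have h := Finset.card_le_card_of_injOn (f := fun C => C ∪ T)
      (s := (I \ T).powersetCard s) (t := F) ?_ ?_
    · rwa [Finset.card_powersetCard, hITcard] at h
    · intro C hC
      rw [Finset.mem_coe] at hC ⊢
      rw [Finset.mem_powersetCard] at hC
      obtain ⟨hCsub, hCcard⟩ := hC
      have hdisj : Disjoint C T :=
        Finset.disjoint_left.mpr fun a haC haT => (mem_sdiff.mp (hCsub haC)).2 haT
      rw [hF]
      refine ⟨union_subset (hCsub.trans sdiff_subset) hT, ?_, subset_union_right⟩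
      rw [card_union_of_disjoint hdisj, hCcard, hTc]; omega
    · intro C1 h1 C2 h2 heq
      simp only [Finset.mem_coe, Finset.mem_powersetCard] at h1 h2
      have d1 : Disjoint C1 T :=
        Finset.disjoint_left.mpr fun a haC haT => (mem_sdiff.mp (h1.1 haC)).2 haT
      have d2 : Disjoint C2 T :=
        Finset.disjoint_left.mpr fun a haC haT => (mem_sdiff.mp (h2.1 haC)).2 haT
      have e1 : (C1 ∪ T) \ T = C1 := union_sdiff_cancel_right d1
      have e2 : (C2 ∪ T) \ T = C2 := union_sdiff_cancel_right d2
      have heq' : C1 ∪ T = C2 ∪ T := heq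
      rw [← e1, ← e2, heq']
  have hcx_le : ∀ x ∈ I \ T, (F.filter (fun B => x ∈ B)).card ≤ e := by
    intro x hx
    have hxI : x ∈ I := (mem_sdiff.mp hx).1
    have hxT : x ∉ T := (mem_sdiff.mp hx).2
    have h := Finset.card_le_card_of_injOn (f := fun B => (B \ T).erase x)
      (s := F.filter (fun B => x ∈ B)) (t := ((I \ T).erase x).powersetCard (s-1)) ?_ ?_
    · rwa [Finset.card_powersetCard, Finset.card_erase_of_mem hx, hITcard, ← he] at h
    · intro B hB
      rw [Finset.mem_coe] at hB ⊢
      rw [mem_filter] at hB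
      obtain ⟨hBF, hxB⟩ := hB
      rw [hF] at hBF; obtain ⟨hBI, hBc, hTB⟩ := hBF
      rw [Finset.mem_powersetCard]
      constructor
      · exact erase_subset_erase x (sdiff_subset_sdiff hBI (Finset.Subset.refl T))
      · rw [card_erase_of_mem (mem_sdiff.mpr ⟨hxB, hxT⟩), card_sdiff_of_subset hTB, hBc, hTc]; omega
    · intro B1 h1 B2 h2 heq
      simp only [Finset.mem_coe, mem_filter] at h1 h2
      have heq' : (B1 \ T).erase x = (B2 \ T).erase x := heq
      have hrec : ∀ B : Finset ℕ, B ∈ F → x ∈ B → insert x ((B \ T).erase x) ∪ T = B := by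
        intro B hBF hxB
        obtain ⟨hBI, hBc, hTB⟩ := (hF B).1 hBF
        rw [Finset.insert_erase (mem_sdiff.mpr ⟨hxB, hxT⟩), Finset.sdiff_union_of_subset hTB]
      rw [← hrec B1 h1.1 h1.2, ← hrec B2 h2.1 h2.2, heq']
  have hNe : N * e = s * Nat.choose N s := by
    obtain ⟨N', rfl⟩ : ∃ N', N = N' + 1 := ⟨N - 1, by omega⟩
    obtain ⟨s', rfl⟩ : ∃ s', s = s' + 1 := ⟨s - 1, by omega⟩
    rw [he]
    simp only [Nat.add_sub_cancel]
    calc (N' + 1) * N'.choose s' = (N' + 1).choose (s' + 1) * (s' + 1) :=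
          Nat.add_one_mul_choose_eq N' s'
      _ = (s' + 1) * (N' + 1).choose (s' + 1) := mul_comm _ _
  have key : 3*k * G.card^2 ≤ 2*t * G.card^2 + 2 * (N * e^2) := by
    have h1 : 3*k * G.card^2 ≤ ∑ B ∈ G, ∑ B' ∈ G, (2*t + 2*(((B ∩ B') \ T).card)) := by
      have h2 : ∑ B ∈ G, ∑ B' ∈ G, (3*k) = 3*k*G.card^2 := by
        simp [Finset.sum_const, smul_eq_mul]; ring
      rw [← h2]
      exact Finset.sum_le_sum fun B hB => Finset.sum_le_sum fun B' hB' => hpair B hB B' hB'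
    have h3 : ∑ B ∈ G, ∑ B' ∈ G, (2*t + 2*(((B ∩ B') \ T).card))
        = 2*t*G.card^2 + 2 * ∑ B ∈ G, ∑ B' ∈ G, ((B ∩ B') \ T).card := by
      rw [Finset.sum_congr rfl fun B (_ : B ∈ G) => Finset.sum_add_distrib]
      rw [Finset.sum_add_distrib]
      simp only [Finset.sum_const, smul_eq_mul, ← Finset.mul_sum]
      ring
    have h4 : ∑ B ∈ G, ∑ B' ∈ G, ((B ∩ B') \ T).card
        ≤ ∑ B ∈ F, ∑ B' ∈ F, ((B ∩ B') \ T).card := by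
      refine le_trans (Finset.sum_le_sum fun B hB => Finset.sum_le_sum_of_subset hG) ?_
      exact Finset.sum_le_sum_of_subset hG
    have h5 : ∑ x ∈ I \ T, ((F.filter (fun B => x ∈ B)).card)^2 ≤ N * e^2 := by
      calc ∑ x ∈ I \ T, ((F.filter (fun B => x ∈ B)).card)^2
          ≤ ∑ x ∈ I \ T, e^2 :=
            Finset.sum_le_sum fun x hx => Nat.pow_le_pow_left (hcx_le x hx) 2
        _ = N * e^2 := by rw [Finset.sum_const, hITcard, smul_eq_mul]
    rw [hdouble] at h4
    omega
  have hkey3 : 3*k*N*G.card^2 ≤ 2*t*N*G.card^2 + 2*s^2*F.card^2 := by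
    have h6 : N * (3*k*G.card^2) ≤ N * (2*t * G.card^2 + 2 * (N * e^2)) :=
      Nat.mul_le_mul_left N key
    have h8 : N * e ≤ s * F.card := by
      rw [hNe]; exact Nat.mul_le_mul_left s hf
    have h9 : (N*e)^2 ≤ (s*F.card)^2 := Nat.pow_le_pow_left h8 2
    ring_nf at h6 h9 ⊢
    linarith [h6, h9]
  have hts : 3*s^2 + 2*t*N ≤ 3*k*N := by
    zify at hst hNt ⊢
    have hsz : (s:ℤ) = 2*k - t := by linarith
    have hNz : (N:ℤ) = 4*k - t := by linarith
    have htz : (t:ℤ) ≤ k := by exact_mod_cast htk.le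
    have ht0 : (0:ℤ) ≤ t := by positivity
    rw [hsz, hNz]
    nlinarith [mul_le_mul_of_nonneg_right htz ht0]
  have h3g : 3*G.card^2 ≤ 2*F.card^2 := by
    have h10 : (3*s^2 + 2*t*N) * G.card^2 ≤ (3*k*N)*G.card^2 :=
      Nat.mul_le_mul_right _ hts
    have h11 : s^2 * (3*G.card^2) ≤ s^2 * (2*F.card^2) := by
      ring_nf at h10 hkey3 ⊢
      linarith [h10, hkey3]
    exact Nat.le_of_mul_le_mul_left h11 (by positivity)
  exact six_five_of_sq h3g

private lemma dTV_triangle' (p q r : X → ℝ) (h1 : Summable fun x => |q x - p x|)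
    (h2 : Summable fun x => |q x - r x|) : dTV p r ≤ dTV q p + dTV q r := by
  unfold dTV
  have hb : ∀ x, |p x - r x| ≤ |q x - p x| + |q x - r x| := by
    intro x
    have hxx : p x - r x = -((q x - p x)) + (q x - r x) := by ring
    rw [hxx]
    refine le_trans (abs_add_le _ _) ?_
    rw [abs_neg]
  have hsum2 : Summable fun x => |q x - p x| + |q x - r x| := h1.add h2
  have hs : Summable fun x => |p x - r x| :=
    Summable.of_nonneg_of_le (fun x => abs_nonneg _) hb hsum2
  have hle := Summable.tsum_le_tsum hb hs hsum2
  rw [Summable.tsum_add h1 h2] at hle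
  linarith

private lemma summable_of_pmf {q : X → ℝ} (hq : IsPMF q) : Summable q := by
  by_contra h
  have hz := tsum_eq_zero_of_not_summable h
  rw [hq.2] at hz
  norm_num at hz

private lemma summable_abs_sub (q p : X → ℝ) (hq : IsPMF q) (hp0 : ∀ x, 0 ≤ p x)
    (s : Finset X) (hp : ∀ x ∉ s, p x = 0) : Summable fun x => |q x - p x| := by
  have hqs : Summable q := summable_of_pmf hq
  have hps : Summable p := summable_of_ne_finset_zero hp
  refine Summable.of_nonneg_of_le (fun x => abs_nonneg _) (fun x => ?_) (hqs.add hps)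
  calc |q x - p x| ≤ |q x| + |p x| := abs_sub _ _
    _ = q x + p x := by rw [abs_of_nonneg (hq.1 x), abs_of_nonneg (hp0 x)]

private lemma pDist_00 (γ : ℝ) (B : Finset ℕ) (j : ℕ) : pDist γ B j ((0:ℕ),(0:ℕ)) = 1 - γ := by
  have h : ¬((0:ℕ) = 2*j+1) := by omega
  simp [pDist, h]

private lemma pDist_mem (γ : ℝ) (B : Finset ℕ) (j : ℕ) (a : ℕ) (ha : a ∈ B) :
    pDist γ B j (a, 2*j+1) = γ / (B.card : ℝ) := by
  have h : ¬((a, 2*j+1) = ((0:ℕ),(0:ℕ))) := by simp [Prod.ext_iff]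
  simp [pDist, h, ha]

private lemma pDist_notmem (γ : ℝ) (B : Finset ℕ) (j : ℕ) (a : ℕ) (ha : a ∉ B) :
    pDist γ B j (a, 2*j+1) = 0 := by
  have h : ¬((a, 2*j+1) = ((0:ℕ),(0:ℕ))) := by simp [Prod.ext_iff]
  simp [pDist, h, ha]

private lemma pDist_nonneg {γ : ℝ} (hγ0 : 0 ≤ γ) (hγ1 : γ ≤ 1) (B : Finset ℕ) (j : ℕ)
    (x : ℕ × ℕ) : 0 ≤ pDist γ B j x := by
  unfold pDist
  have h1 : (0:ℝ) ≤ γ / (B.card : ℝ) := by positivity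
  split_ifs <;> simp <;> linarith

private lemma pDist_zero_of_notin (γ : ℝ) (B : Finset ℕ) (j k : ℕ)
    (hBI : B ⊆ Finset.Icc 1 (4*k)) (x : ℕ × ℕ)
    (hx : x ∉ insert ((0:ℕ),(0:ℕ)) ((Finset.Icc 1 (4*k)) ×ˢ ({2*j+1} : Finset ℕ))) :
    pDist γ B j x = 0 := by
  rw [Finset.mem_insert] at hx
  push_neg at hx
  obtain ⟨hx1, hx2⟩ := hx
  unfold pDist
  rw [if_neg hx1, if_neg, add_zero]
  rintro ⟨h1, h2⟩
  exact hx2 (Finset.mem_product.mpr ⟨hBI h1, by simp [h2]⟩)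

private lemma notin_prod (k j : ℕ) :
    ((0:ℕ),(0:ℕ)) ∉ (Finset.Icc 1 (4*k)) ×ˢ ({2*j+1} : Finset ℕ) := by
  simp

private lemma sum_ind (I B : Finset ℕ) (hBI : B ⊆ I) (c : ℝ) :
    ∑ a ∈ I, (if a ∈ B then c else 0) = (B.card : ℝ) * c := by
  rw [Finset.sum_ite_mem, Finset.inter_eq_right.mpr hBI, Finset.sum_const, nsmul_eq_mul]

private lemma dTV_pDist_pair (γ : ℝ) (hγ0 : 0 < γ) (k j : ℕ) (hk : 1 ≤ k)
    (B B' : Finset ℕ) (hBI : B ⊆ Finset.Icc 1 (4*k)) (hB'I : B' ⊆ Finset.Icc 1 (4*k))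
    (hBc : B.card = 2*k) (hB'c : B'.card = 2*k)
    (hd : dTV (pDist γ B j) (pDist γ B' j) ≤ γ/4) :
    3*k ≤ 2 * (B ∩ B').card := by
  classical
  set I := Finset.Icc 1 (4*k) with hI
  set D := insert ((0:ℕ),(0:ℕ)) (I ×ˢ ({2*j+1} : Finset ℕ)) with hD
  have hk0 : (0:ℝ) < (2*k : ℝ) := by
    have : (1:ℝ) ≤ (k:ℝ) := by exact_mod_cast hk
    linarith
  have hc0 : (0:ℝ) < γ / (2*k : ℝ) := by positivity
  have hval : ∀ C : Finset ℕ, C.card = 2*k → ∀ a : ℕ,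
      pDist γ C j (a, 2*j+1) = if a ∈ C then γ / (2*k : ℝ) else 0 := by
    intro C hC a
    by_cases h : a ∈ C
    · rw [if_pos h, pDist_mem γ C j a h, hC]; push_cast; ring_nf
    · rw [if_neg h, pDist_notmem γ C j a h]
  have heq : dTV (pDist γ B j) (pDist γ B' j)
      = (γ / (2*k : ℝ)) * ((4*k : ℝ) - 2 * ((B ∩ B').card : ℝ)) / 2 := by
    unfold dTV
    rw [tsum_eq_sum (s := D) ?h0]
    case h0 =>
      intro x hx
      rw [pDist_zero_of_notin γ B j k hBI x hx, pDist_zero_of_notin γ B' j k hB'I x hx]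
      simp
    rw [hD, Finset.sum_insert (notin_prod k j)]
    rw [pDist_00, pDist_00, sub_self, abs_zero]
    rw [Finset.sum_product, Finset.sum_congr rfl
      (fun a _ => Finset.sum_singleton
        (fun b => |pDist γ B j (a, b) - pDist γ B' j (a, b)|) (2*j+1))]
    have hpt : ∀ a ∈ I, |pDist γ B j (a, 2*j+1) - pDist γ B' j (a, 2*j+1)|
        = (γ / (2*k:ℝ)) * ((if a ∈ B then (1:ℝ) else 0) + (if a ∈ B' then (1:ℝ) else 0)
            - 2 * (if a ∈ B ∩ B' then (1:ℝ) else 0)) := by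
      intro a _
      rw [hval B hBc a, hval B' hB'c a]
      by_cases h1 : a ∈ B <;> by_cases h2 : a ∈ B' <;>
        simp [h1, h2, Finset.mem_inter, abs_of_nonneg hc0.le, abs_of_nonpos,
          abs_of_nonneg] <;>
        ring_nf <;> simp [abs_of_nonneg hc0.le]
    rw [Finset.sum_congr rfl hpt]
    have hsplit : ∑ a ∈ I, (γ / (2*k:ℝ)) * ((if a ∈ B then (1:ℝ) else 0)
            + (if a ∈ B' then (1:ℝ) else 0)
            - 2 * (if a ∈ B ∩ B' then (1:ℝ) else 0))
        = (γ / (2*k:ℝ)) * ((B.card : ℝ) + (B'.card : ℝ) - 2 * ((B ∩ B').card : ℝ)) := by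
      rw [← Finset.mul_sum]
      congr 1
      rw [Finset.sum_sub_distrib, Finset.sum_add_distrib]
      rw [sum_ind I B hBI 1, sum_ind I B' hB'I 1, ← Finset.mul_sum,
        sum_ind I (B ∩ B') ((Finset.inter_subset_left).trans hBI) 1]
      ring
    rw [hsplit, hBc, hB'c]
    push_cast
    ring
  rw [heq] at hd
  have h4 : γ * ((4*k:ℝ) - 2*((B ∩ B').card : ℝ)) ≤ γ * k := by
    rw [div_mul_eq_mul_div, div_div, div_le_div_iff₀ (by positivity) (by norm_num)] at hd
    nlinarith [hd]
  have h2 : (4*k:ℝ) - 2*((B ∩ B').card : ℝ) ≤ k := le_of_mul_le_mul_left h4 hγ0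
  have h3 : (3*k : ℝ) ≤ 2 * ((B ∩ B').card : ℝ) := by linarith
  exact_mod_cast h3

private lemma sum_D_pDist (γ : ℝ) (k j : ℕ) (hk : 1 ≤ k) (B : Finset ℕ)
    (hBI : B ⊆ Finset.Icc 1 (4*k)) (hBc : B.card = 2*k) :
    ∑ x ∈ insert ((0:ℕ),(0:ℕ)) ((Finset.Icc 1 (4*k)) ×ˢ ({2*j+1} : Finset ℕ)),
      pDist γ B j x = 1 := by
  rw [Finset.sum_insert (notin_prod k j), pDist_00]
  rw [Finset.sum_product, Finset.sum_congr rfl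
    (fun a _ => Finset.sum_singleton (fun b => pDist γ B j (a, b)) (2*j+1))]
  have hval : ∀ a ∈ Finset.Icc 1 (4*k), pDist γ B j (a, 2*j+1)
      = if a ∈ B then γ / (2*k : ℝ) else 0 := by
    intro a _
    by_cases h : a ∈ B
    · rw [if_pos h, pDist_mem γ B j a h, hBc]; push_cast; ring_nf
    · rw [if_neg h, pDist_notmem γ B j a h]
  rw [Finset.sum_congr rfl hval, sum_ind _ B hBI _, hBc]
  have hk0 : ((2*k : ℕ) : ℝ) ≠ 0 := by positivity
  push_cast at hk0 ⊢
  field_simp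
  ring

open scoped Classical in
private lemma iidProb_eq_sum (p : ℕ × ℕ → ℝ) (n : ℕ) (D : Finset (ℕ × ℕ))
    (hp : ∀ x ∉ D, p x = 0) (E : Set (Fin n → ℕ × ℕ)) :
    iidProb p n E = ∑ S ∈ Fintype.piFinset (fun _ : Fin n => D),
      (if S ∈ E then ∏ i, p (S i) else 0) := by
  rw [iidProb, tsum_eq_sum (s := Fintype.piFinset (fun _ : Fin n => D)) ?h0]
  · exact Finset.sum_congr rfl fun S _ => by rw [Set.indicator_apply]
  case h0 =>
    intro S hS
    rw [Fintype.mem_piFinset] at hS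
    push_neg at hS
    obtain ⟨i, hi⟩ := hS
    have hz : ∏ i, p (S i) = 0 := Finset.prod_eq_zero (Finset.mem_univ i) (hp _ hi)
    rw [Set.indicator_apply]
    split_ifs <;> simp [hz]

private lemma sum_piFinset_prod (p : ℕ × ℕ → ℝ) (n : ℕ) (D : Finset (ℕ × ℕ))
    (hsum : ∑ x ∈ D, p x = 1) :
    ∑ S ∈ Fintype.piFinset (fun _ : Fin n => D), ∏ i, p (S i) = 1 := by
  rw [← Finset.prod_univ_sum]
  simp [hsum]

end AuxPacking

/-- the realizable sample complexity of the class
`P_{γ,4k,j} = {(1−γ)·δ_{(0,0)} + γ·U_{B×{2j+1}} : ∅ ≠ B ⊆ {1,…,4k}}` at accuracy `γ/8`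
and confidence `1/7` is at least `k`. -/
theorem packing_class_sample_complexity_lower_bound
    (γ : ℝ) (hγ : γ ∈ Set.Ioo (0:ℝ) 1) (k j : ℕ) (hk : 1 ≤ k) (hj : 1 ≤ j)
    (Alg : (n : ℕ) → (Fin n → ℕ × ℕ) → (ℕ × ℕ → ℝ)) (hAlg : IsLearner Alg)
    (n : ℕ) (hn : n < k) :
    ∃ B : Finset ℕ, B ⊆ Finset.Icc 1 (4 * k) ∧ B.Nonempty ∧
      iidProb (pDist γ B j) n {S | dTV (Alg n S) (pDist γ B j) ≤ γ / 8} < 6 / 7 := by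
  classical
  obtain ⟨hγ0, hγ1⟩ := hγ
  by_contra hcon
  push_neg at hcon
  set I : Finset ℕ := Finset.Icc 1 (4*k) with hIdef
  set D : Finset (ℕ × ℕ) := insert ((0:ℕ),(0:ℕ)) (I ×ˢ ({2*j+1} : Finset ℕ)) with hDdef
  set Ω : Finset (Fin n → ℕ × ℕ) := Fintype.piFinset (fun _ => D) with hΩdef
  set F0 : Finset (Finset ℕ) := I.powersetCard (2*k) with hF0def
  have hIcard : I.card = 4*k := by rw [hIdef, Nat.card_Icc]; omega
  have hF0mem : ∀ B ∈ F0, B ⊆ I ∧ B.card = 2*k := fun B hB => Finset.mem_powersetCard.mp hB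
  have hF0ne : F0.Nonempty :=
    Finset.powersetCard_nonempty.2 (by rw [hIcard]; omega)
  -- the event
  set EV : Finset ℕ → Set (Fin n → ℕ × ℕ) :=
    fun B => {S | dTV (Alg n S) (pDist γ B j) ≤ γ / 8} with hEVdef
  -- pairwise intersection bound
  have hpairmain : ∀ (q : ℕ × ℕ → ℝ), IsPMF q → ∀ B B' : Finset ℕ,
      B ⊆ I → B' ⊆ I → B.card = 2*k → B'.card = 2*k →
      dTV q (pDist γ B j) ≤ γ/8 → dTV q (pDist γ B' j) ≤ γ/8 →
      3*k ≤ 2*(B ∩ B').card := by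
    intro q hq B B' hBI hB'I hBc hB'c h1 h2
    have s1 : Summable fun x => |q x - pDist γ B j x| :=
      summable_abs_sub q _ hq (pDist_nonneg hγ0.le hγ1.le B j) D
        (fun x hx => pDist_zero_of_notin γ B j k hBI x hx)
    have s2 : Summable fun x => |q x - pDist γ B' j x| :=
      summable_abs_sub q _ hq (pDist_nonneg hγ0.le hγ1.le B' j) D
        (fun x hx => pDist_zero_of_notin γ B' j k hB'I x hx)
    have htri := dTV_triangle' (pDist γ B j) q (pDist γ B' j) s1 s2
    exact dTV_pDist_pair γ hγ0 k j hk B B' hBI hB'I hBc hB'c (by linarith)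
  -- core per-sample inequality
  have hcore : ∀ S ∈ Ω,
      6 * ∑ B ∈ F0, (if dTV (Alg n S) (pDist γ B j) ≤ γ/8
          then ∏ i, pDist γ B j (S i) else 0)
        ≤ 5 * ∑ B ∈ F0, ∏ i, pDist γ B j (S i) := by
    intro S hSΩ
    rw [hΩdef, Fintype.mem_piFinset] at hSΩ
    set q := Alg n S with hqdef
    set T : Finset ℕ :=
      (Finset.univ.filter (fun i => S i ≠ ((0:ℕ),(0:ℕ)))).image (fun i => (S i).1) with hTdef
    have hSfacts : ∀ i : Fin n, S i ≠ ((0:ℕ),(0:ℕ)) →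
        (S i).1 ∈ I ∧ (S i).2 = 2*j+1 := by
      intro i hi
      have hD := hSΩ i
      rw [hDdef, Finset.mem_insert] at hD
      rcases hD with h | h
      · exact absurd h hi
      · have := Finset.mem_product.mp h
        exact ⟨this.1, by simpa using this.2⟩
    have hTI : T ⊆ I := by
      intro a ha
      rw [hTdef, Finset.mem_image] at ha
      obtain ⟨i, hi, rfl⟩ := ha
      rw [Finset.mem_filter] at hi
      exact (hSfacts i hi.2).1
    have hTn : T.card ≤ n :=
      le_trans Finset.card_image_le (le_trans (Finset.card_filter_le _ _) (by simp))
    have htk : T.card < k := lt_of_le_of_lt hTn hn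
    set w : ℝ := ∏ i, (if S i = ((0:ℕ),(0:ℕ)) then 1 - γ else γ / (2*(k:ℝ))) with hwdef
    have hw0 : 0 ≤ w := by
      apply Finset.prod_nonneg
      intro i _
      split_ifs
      · linarith
      · positivity
    have hprod : ∀ B ∈ F0, (∏ i, pDist γ B j (S i)) = if T ⊆ B then w else 0 := by
      intro B hB
      obtain ⟨hBI, hBc⟩ := hF0mem B hB
      by_cases hTB : T ⊆ B
      · rw [if_pos hTB, hwdef]
        refine Finset.prod_congr rfl fun i _ => ?_
        by_cases hi : S i = ((0:ℕ),(0:ℕ))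
        · rw [if_pos hi, hi, pDist_00]
        · rw [if_neg hi]
          obtain ⟨h1, h2⟩ := hSfacts i hi
          have hmemT : (S i).1 ∈ T := by
            rw [hTdef, Finset.mem_image]
            exact ⟨i, Finset.mem_filter.mpr ⟨Finset.mem_univ i, hi⟩, rfl⟩
          have hmemB : (S i).1 ∈ B := hTB hmemT
          have hSi : S i = ((S i).1, 2*j+1) := by
            rw [← h2]
          rw [hSi, pDist_mem γ B j _ hmemB, hBc]
          push_cast
          ring_nf
      · rw [if_neg hTB]
        rw [Finset.not_subset] at hTB
        obtain ⟨a, haT, haB⟩ := hTB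
        rw [hTdef, Finset.mem_image] at haT
        obtain ⟨i, hi, rfl⟩ := haT
        rw [Finset.mem_filter] at hi
        obtain ⟨-, hi⟩ := hi
        apply Finset.prod_eq_zero (Finset.mem_univ i)
        obtain ⟨h1, h2⟩ := hSfacts i hi
        have hSi : S i = ((S i).1, 2*j+1) := by rw [← h2]
        rw [hSi]
        exact pDist_notmem γ B j _ haB
    have hL : ∑ B ∈ F0, (if dTV q (pDist γ B j) ≤ γ/8
          then ∏ i, pDist γ B j (S i) else 0)
        = ((F0.filter (fun B => T ⊆ B ∧ dTV q (pDist γ B j) ≤ γ/8)).card : ℝ) * w := by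
      have hterm : ∀ B ∈ F0, (if dTV q (pDist γ B j) ≤ γ/8
            then ∏ i, pDist γ B j (S i) else 0)
          = if (T ⊆ B ∧ dTV q (pDist γ B j) ≤ γ/8) then w else 0 := by
        intro B hB
        rw [hprod B hB]
        split_ifs <;> first | rfl | tauto
      rw [Finset.sum_congr rfl hterm, ← Finset.sum_filter, Finset.sum_const, nsmul_eq_mul]
    have hR : ∑ B ∈ F0, ∏ i, pDist γ B j (S i)
        = ((F0.filter (fun B => T ⊆ B)).card : ℝ) * w := by
      rw [Finset.sum_congr rfl hprod, ← Finset.sum_filter, Finset.sum_const, nsmul_eq_mul]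
    rw [hL, hR]
    have hnat : 6 * (F0.filter (fun B => T ⊆ B ∧ dTV q (pDist γ B j) ≤ γ/8)).card
        ≤ 5 * (F0.filter (fun B => T ⊆ B)).card := by
      apply clique_bound k T.card htk I T hTI hIcard rfl
      · intro B
        rw [Finset.mem_filter, Finset.mem_powersetCard]
        tauto
      · intro B hB
        rw [Finset.mem_filter] at hB ⊢
        exact ⟨hB.1, hB.2.1⟩
      · intro B hB B' hB'
        rw [Finset.mem_filter] at hB hB'
        obtain ⟨hBF0, hTB, hdB⟩ := hB
        obtain ⟨hB'F0, hTB', hdB'⟩ := hB'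
        obtain ⟨hBI, hBc⟩ := hF0mem B hBF0
        obtain ⟨hB'I, hB'c⟩ := hF0mem B' hB'F0
        have hmain := hpairmain q (hAlg n S) B B' hBI hB'I hBc hB'c hdB hdB'
        have hcards : ((B ∩ B') \ T).card + T.card = (B ∩ B').card :=
          Finset.card_sdiff_add_card_eq_card
            (Finset.subset_inter hTB hTB')
        omega
    have hcast : (6:ℝ) * ((F0.filter (fun B => T ⊆ B ∧ dTV q (pDist γ B j) ≤ γ/8)).card : ℝ)
        ≤ 5 * ((F0.filter (fun B => T ⊆ B)).card : ℝ) := by exact_mod_cast hnat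
    nlinarith [mul_le_mul_of_nonneg_right hcast hw0]
  -- upper bound on the sum of success probabilities
  have hup : 6 * ∑ B ∈ F0, iidProb (pDist γ B j) n (EV B) ≤ 5 * (F0.card : ℝ) := by
    have hrw : ∀ B ∈ F0, iidProb (pDist γ B j) n (EV B)
        = ∑ S ∈ Ω, (if dTV (Alg n S) (pDist γ B j) ≤ γ/8
            then ∏ i, pDist γ B j (S i) else 0) := by
      intro B hB
      rw [iidProb_eq_sum _ n D
        (fun x hx => pDist_zero_of_notin γ B j k (hF0mem B hB).1 x hx) (EV B)]
      exact Finset.sum_congr rfl fun S _ => by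
        simp only [hEVdef, Set.mem_setOf_eq]
    calc 6 * ∑ B ∈ F0, iidProb (pDist γ B j) n (EV B)
        = 6 * ∑ B ∈ F0, ∑ S ∈ Ω, (if dTV (Alg n S) (pDist γ B j) ≤ γ/8
            then ∏ i, pDist γ B j (S i) else 0) := by
          rw [Finset.sum_congr rfl hrw]
      _ = ∑ S ∈ Ω, 6 * ∑ B ∈ F0, (if dTV (Alg n S) (pDist γ B j) ≤ γ/8
            then ∏ i, pDist γ B j (S i) else 0) := by
          rw [Finset.sum_comm, Finset.mul_sum]
      _ ≤ ∑ S ∈ Ω, 5 * ∑ B ∈ F0, ∏ i, pDist γ B j (S i) :=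
          Finset.sum_le_sum hcore
      _ = 5 * ∑ B ∈ F0, ∑ S ∈ Ω, ∏ i, pDist γ B j (S i) := by
          rw [← Finset.mul_sum, Finset.sum_comm]
      _ = 5 * ∑ B ∈ F0, (1:ℝ) := by
          rw [Finset.sum_congr rfl fun B hB => sum_piFinset_prod (pDist γ B j) n D
            (sum_D_pDist γ k j hk B (hF0mem B hB).1 (hF0mem B hB).2)]
      _ = 5 * (F0.card : ℝ) := by rw [Finset.sum_const, nsmul_eq_mul]; ring
  -- lower bound from the contradiction hypothesis
  have hlow : (6/7 : ℝ) * (F0.card : ℝ) ≤ ∑ B ∈ F0, iidProb (pDist γ B j) n (EV B) := by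
    have hone : ∀ B ∈ F0, (6/7:ℝ) ≤ iidProb (pDist γ B j) n (EV B) := by
      intro B hB
      obtain ⟨hBI, hBc⟩ := hF0mem B hB
      have hBne : B.Nonempty := Finset.card_pos.mp (by omega)
      exact hcon B hBI hBne
    calc (6/7:ℝ) * (F0.card : ℝ) = ∑ _B ∈ F0, (6/7:ℝ) := by
          rw [Finset.sum_const, nsmul_eq_mul]; ring
      _ ≤ ∑ B ∈ F0, iidProb (pDist γ B j) n (EV B) := Finset.sum_le_sum hone
  have hF0pos : (1:ℝ) ≤ (F0.card : ℝ) := by exact_mod_cast hF0ne.card_pos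
  linarith [hup, hlow]

end RobustDistLearn
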